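/- For every z ∈ ℝ^M, every real λ ≠ 0, every μ ∈ ℝ, and every j ∈ {1,…,m}, the N×N submatrix of T(z,λ)^m − μ·I_M formed by the rows and columns with indices j, m+j, 2m+j, …, m(N−1)+j (in this order) is equal to L_j(λ^m) − μ·I_N. -/

import Mathlib

open Matrix
open Fin.NatCast

/-- The periodic Bogoyavlensky Lax matrix
`T(z,λ) = λ^{1−m} Σ_k z_k E_{k,k+m−1} + λ Σ_k E_{k+1,k}` (indices mod M), real λ. -/
noncomputable def Tm (m M : ℕ) [NeZero M] (z : Fin M → ℝ) (lam : ℝ) :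
    Matrix (Fin M) (Fin M) ℝ :=
  lam ^ ((1 : ℤ) - (m : ℤ)) • (∑ k : Fin M, Matrix.single k (k + ((m - 1 : ℕ) : Fin M)) (z k))
    + lam • ∑ k : Fin M, Matrix.single (k + 1) k 1

/-- `v_k^{(j)} = z_{m(k−1)+j}` (here `k : Fin N` is 0-based, `j` is 1-based). -/
def vv (m : ℕ) (N M : ℕ) [NeZero M] (z : Fin M → ℝ) (j : ℕ) (k : Fin N) : ℝ :=
  z ((m * k.val + (j - 1) : ℕ) : Fin M)

/-- `U_1(λ) = λ Σ_k E_{k+1,k} + Σ_k v_k^{(1)} E_{kk}` (indices mod N). -/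
noncomputable def U1 (m N M : ℕ) [NeZero N] [NeZero M] (z : Fin M → ℝ) (lam : ℝ) :
    Matrix (Fin N) (Fin N) ℝ :=
  lam • (∑ k : Fin N, Matrix.single (k + 1) k 1)
    + ∑ k : Fin N, Matrix.single k k (vv m N M z 1 k)

/-- `V_j(λ) = I + λ⁻¹ Σ_k v_k^{(j)} E_{k,k+1}` (indices mod N, `j` 1-based). -/
noncomputable def Vm (m N M : ℕ) [NeZero N] [NeZero M] (z : Fin M → ℝ) (j : ℕ) (lam : ℝ) :
    Matrix (Fin N) (Fin N) ℝ :=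
  1 + lam⁻¹ • ∑ k : Fin N, Matrix.single k (k + 1) (vv m N M z j k)

/-- `L_j(λ) = V_j ⬝ ⋯ ⬝ V_2 ⬝ U_1 ⬝ V_m ⬝ ⋯ ⬝ V_{j+1}` (`j` 1-based, `1 ≤ j ≤ m`). -/
noncomputable def Lm (m N M : ℕ) [NeZero N] [NeZero M] (z : Fin M → ℝ) (j : ℕ) (lam : ℝ) :
    Matrix (Fin N) (Fin N) ℝ :=
  (((List.range' 2 (j - 1)).reverse.map (fun t => Vm m N M z t lam)).prod)
    * U1 m N M z lam
    * (((List.range' (j + 1) (m - j)).reverse.map (fun t => Vm m N M z t lam)).prod)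

section Aux
variable (m M : ℕ) [NeZero M]

noncomputable def Sm (M : ℕ) [NeZero M] : Matrix (Fin M) (Fin M) ℝ :=
  ∑ k : Fin M, Matrix.single (k + 1) k (1 : ℝ)

noncomputable def Wm (z : Fin M → ℝ) (lam : ℝ) (i : ℕ) : Matrix (Fin M) (Fin M) ℝ :=
  1 + (lam ^ m)⁻¹ • ∑ k : Fin M,
      Matrix.single k (k + ((m : ℕ) : Fin M)) (z (k + ((i + 1 : ℕ) : Fin M)))

lemma sum_ite_one_mul {n : ℕ} [NeZero n] (g : Fin n → ℝ) (c0 : Fin n) :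
    (∑ c : Fin n, (if c = c0 then (1 : ℝ) else 0) * g c) = g c0 := by
  rw [Finset.sum_eq_single c0] <;> simp +contextual

lemma sum_mul_ite_one {n : ℕ} [NeZero n] (g : Fin n → ℝ) (c0 : Fin n) :
    (∑ c : Fin n, g c * (if c = c0 then (1 : ℝ) else 0)) = g c0 := by
  rw [Finset.sum_eq_single c0] <;> simp +contextual

lemma Sm_apply (a b : Fin M) : Sm M a b = if b + 1 = a then 1 else 0 := by
  rw [Sm, Matrix.sum_apply]
  rw [Finset.sum_eq_single b]
  · simp [Matrix.single]
  · intro k _ hk; simp [Matrix.single, hk, Ne.symm hk]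
  · simp

lemma Wm_apply (z : Fin M → ℝ) (lam : ℝ) (i : ℕ) (a b : Fin M) :
    Wm m M z lam i a b = (if a = b then 1 else 0)
      + (lam ^ m)⁻¹ * (if a + ((m : ℕ) : Fin M) = b then z (a + ((i + 1 : ℕ) : Fin M)) else 0) := by
  rw [Wm, Matrix.add_apply, Matrix.smul_apply, Matrix.sum_apply, Matrix.one_apply]
  congr 1
  rw [smul_eq_mul]
  congr 1
  rw [Finset.sum_eq_single a]
  · simp [Matrix.single]
  · intro k _ hk; simp [Matrix.single, hk, Ne.symm hk]
  · simp

lemma Smpow_apply (n : ℕ) (a b : Fin M) :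
    (Sm M ^ n) a b = if a = b + ((n : ℕ) : Fin M) then 1 else 0 := by
  induction n generalizing a b with
  | zero => simp [Matrix.one_apply]
  | succ n ih =>
    rw [pow_succ, Matrix.mul_apply]
    have h1 : ∀ c, Sm M c b = if c = b + 1 then (1:ℝ) else 0 := by
      intro c; rw [Sm_apply]; congr 1
      simp [eq_comm]
    simp only [h1]
    rw [sum_mul_ite_one (fun c => (Sm M ^ n) a c) (b+1), ih]
    congr 1
    have : ((n + 1 : ℕ) : Fin M) = ((n : ℕ) : Fin M) + 1 := by push_cast; ring
    rw [this]
    congr 1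
    abel

lemma WS (z : Fin M → ℝ) (lam : ℝ) (i : ℕ) :
    Wm m M z lam i * Sm M = Sm M * Wm m M z lam (i + 1) := by
  ext a b
  rw [Matrix.mul_apply, Matrix.mul_apply]
  have h1 : ∀ c, Sm M c b = if c = b + 1 then (1:ℝ) else 0 := by
    intro c; rw [Sm_apply]; congr 1; simp [eq_comm]
  have h2 : ∀ c : Fin M, Sm M a c = if c = a - 1 then (1:ℝ) else 0 := by
    intro c; rw [Sm_apply]; congr 1
    rw [eq_iff_iff]
    constructor
    · intro h; rw [← h]; abel
    · intro h; rw [h]; abel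
  simp only [h1, h2]
  rw [sum_mul_ite_one (fun c => Wm m M z lam i a c) (b+1),
    sum_ite_one_mul (fun c => Wm m M z lam (i+1) c b) (a-1)]
  rw [Wm_apply, Wm_apply]
  have e1 : (a = b + 1) ↔ (a - 1 = b) := by
    constructor
    · intro h; rw [h]; abel
    · intro h; rw [← h]; abel
  have e2 : (a + ((m:ℕ) : Fin M) = b + 1) ↔ (a - 1 + ((m:ℕ) : Fin M) = b) := by
    constructor
    · intro h
      have : a - 1 + ((m:ℕ) : Fin M) = a + ((m:ℕ):Fin M) - 1 := by abel
      rw [this, h]; abel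
    · intro h; rw [← h]; abel
  have e3 : a + ((i + 1 : ℕ) : Fin M) = a - 1 + ((i + 1 + 1 : ℕ) : Fin M) := by
    have : ((i + 1 + 1 : ℕ) : Fin M) = ((i + 1 : ℕ) : Fin M) + 1 := by push_cast; ring
    rw [this]; abel
  rw [if_congr e1 rfl rfl, if_congr e2 rfl rfl, e3]
lemma Tm_apply' (z : Fin M → ℝ) (lam : ℝ) (a b : Fin M) :
    Tm m M z lam a b
      = lam ^ ((1:ℤ) - (m:ℤ)) * (if a + ((m - 1 : ℕ) : Fin M) = b then z a else 0)
        + lam * (if b + 1 = a then 1 else 0) := by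
  rw [Tm, Matrix.add_apply, Matrix.smul_apply, Matrix.smul_apply, Matrix.sum_apply,
    Matrix.sum_apply, smul_eq_mul, smul_eq_mul]
  congr 1
  · congr 1
    rw [Finset.sum_eq_single a]
    · simp [Matrix.single]
    · intro k _ hk; simp [Matrix.single, hk, Ne.symm hk]
    · simp
  · congr 1
    rw [Finset.sum_eq_single b]
    · simp [Matrix.single]
    · intro k _ hk; simp [Matrix.single, hk, Ne.symm hk]
    · simp

lemma T_eq (hm : 2 ≤ m) (z : Fin M → ℝ) (lam : ℝ) (hlam : lam ≠ 0) :
    Tm m M z lam = lam • (Sm M * Wm m M z lam 0) := by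
  have hm1 : ((m : ℕ) : Fin M) = ((m - 1 : ℕ) : Fin M) + 1 := by
    have h : ((m : ℕ) : Fin M) = (((m-1) + 1 : ℕ) : Fin M) := by congr 1; omega
    rw [h]; push_cast; ring
  ext a b
  rw [Matrix.smul_apply, Matrix.mul_apply, smul_eq_mul, Tm_apply']
  have h2 : ∀ c : Fin M, Sm M a c = if c = a - 1 then (1:ℝ) else 0 := by
    intro c; rw [Sm_apply]; congr 1
    rw [eq_iff_iff]
    constructor
    · intro h; rw [← h]; abel
    · intro h; rw [h]; abel
  simp only [h2]
  rw [sum_ite_one_mul (fun c => Wm m M z lam 0 c b) (a-1), Wm_apply]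
  have e1 : (a - 1 = b) = (b + 1 = a) := by
    rw [eq_iff_iff]
    constructor
    · intro h; rw [← h]; abel
    · intro h; rw [← h]; abel
  have e2 : (a - 1 + ((m:ℕ) : Fin M) = b) = (a + ((m - 1 : ℕ) : Fin M) = b) := by
    have : a - 1 + ((m:ℕ) : Fin M) = a + ((m - 1 : ℕ) : Fin M) := by rw [hm1]; abel
    rw [this]
  have e3 : a - 1 + ((0 + 1 : ℕ) : Fin M) = a := by
    have : ((0 + 1 : ℕ) : Fin M) = 1 := by norm_num
    rw [this]; abel
  simp only [e1, e2, e3]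
  have hz : lam ^ ((1:ℤ) - (m:ℤ)) = lam * (lam ^ m)⁻¹ := by
    rw [zpow_sub₀ hlam, zpow_one, zpow_natCast, div_eq_mul_inv]
  rw [hz]; ring

lemma prod_shift (z : Fin M → ℝ) (lam : ℝ) (n : ℕ) :
    ∀ a : ℕ, ((List.range' a n).reverse.map (Wm m M z lam)).prod * Sm M
      = Sm M * ((List.range' (a+1) n).reverse.map (Wm m M z lam)).prod := by
  induction n with
  | zero => simp
  | succ n ih =>
    intro a
    rw [List.range'_succ, List.range'_succ]
    simp only [List.reverse_cons, List.map_append, List.prod_append, List.map_cons,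
      List.map_nil, List.prod_cons, List.prod_nil, mul_one]
    rw [mul_assoc, WS, ← mul_assoc, ih (a+1), mul_assoc]

lemma Tpow (hm : 2 ≤ m) (z : Fin M → ℝ) (lam : ℝ) (hlam : lam ≠ 0) (n : ℕ) :
    Tm m M z lam ^ n
      = (lam ^ n) • (Sm M ^ n * ((List.range' 0 n).reverse.map (Wm m M z lam)).prod) := by
  induction n with
  | zero => simp
  | succ n ih =>
    rw [pow_succ, ih, T_eq m M hm z lam hlam]
    rw [smul_mul_assoc, mul_smul_comm, smul_smul, ← pow_succ]
    congr 1
    calc Sm M ^ n * ((List.range' 0 n).reverse.map (Wm m M z lam)).prod * (Sm M * Wm m M z lam 0)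
        = Sm M ^ n * (((List.range' 0 n).reverse.map (Wm m M z lam)).prod * Sm M) * Wm m M z lam 0 := by
          rw [mul_assoc, mul_assoc, mul_assoc]
      _ = Sm M ^ n * (Sm M * ((List.range' 1 n).reverse.map (Wm m M z lam)).prod) * Wm m M z lam 0 := by
          rw [prod_shift]
      _ = Sm M ^ (n+1) * (((List.range' 1 n).reverse.map (Wm m M z lam)).prod * Wm m M z lam 0) := by
          simp only [pow_succ, mul_assoc]
      _ = Sm M ^ (n+1) * ((List.range' 0 (n+1)).reverse.map (Wm m M z lam)).prod := by
          rw [List.range'_succ]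
          simp [List.reverse_cons, List.map_append, List.prod_append]
end Aux

def iot (m N M : ℕ) [NeZero N] [NeZero M] (j : ℕ) (k : Fin N) : Fin M :=
  ((m * k.val + (j - 1) : ℕ) : Fin M)

lemma fin_natCast_eq {M : ℕ} [NeZero M] {a b : ℕ} (h : a % M = b % M) :
    ((a : ℕ) : Fin M) = ((b : ℕ) : Fin M) := by
  apply Fin.ext; simpa [Fin.val_natCast] using h

lemma val_cast_succ {N : ℕ} [NeZero N] (q : Fin N) : (q + 1 : Fin N).val = (q.val + 1) % N := by
  have h : (q + 1 : Fin N) = ((q.val + 1 : ℕ) : Fin N) := by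
    push_cast [Fin.cast_val_eq_self]; ring
  rw [h, Fin.val_natCast]

lemma cast_shift {m N M : ℕ} [NeZero N] [NeZero M] (hM : M = m * N) (q : Fin N) (c : ℕ) :
    ((m * ((q + 1 : Fin N)).val + c : ℕ) : Fin M) = ((m * q.val + m + c : ℕ) : Fin M) := by
  apply fin_natCast_eq
  subst hM
  rw [val_cast_succ]
  have h1 : (q.val + 1) % N ≡ q.val + 1 [MOD N] := Nat.mod_modEq _ _
  have h2 : m * ((q.val + 1) % N) ≡ m * (q.val + 1) [MOD m * N] := h1.mul_left' _
  have h3 := h2.add_right c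
  have h4 : m * (q.val + 1) + c = m * q.val + m + c := by ring
  rw [h4] at h3
  exact h3

lemma iot_succ {m N M : ℕ} [NeZero N] [NeZero M] {j : ℕ} (hM : M = m * N) (hj : 1 ≤ j) (q : Fin N) :
    iot m N M j (q + 1) = iot m N M j q + ((m : ℕ) : Fin M) := by
  rw [iot, iot, cast_shift hM q (j-1)]
  rw [show m * q.val + m + (j - 1) = (m * q.val + (j-1)) + m by ring]
  push_cast
  ring

lemma iot_inj {m N M : ℕ} [NeZero N] [NeZero M] {j : ℕ} (hM : M = m * N) (hj : 1 ≤ j) (hjm : j ≤ m) :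
    Function.Injective (iot m N M j) := by
  intro p q h
  have hv := congrArg Fin.val h
  rw [iot, iot, Fin.val_natCast, Fin.val_natCast] at hv
  have hb : ∀ r : Fin N, m * r.val + (j - 1) < M := by
    intro r
    have h1 : m * r.val + (j - 1) < m * (r.val + 1) := by rw [Nat.mul_succ]; omega
    have h2 : m * (r.val + 1) ≤ m * N := Nat.mul_le_mul_left m r.isLt
    omega
  rw [Nat.mod_eq_of_lt (hb p), Nat.mod_eq_of_lt (hb q)] at hv
  have : p.val = q.val := by
    have hm0 : 0 < m := by omega
    exact Nat.eq_of_mul_eq_mul_left hm0 (by omega)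
  exact Fin.ext this


lemma Vm_apply (m N M : ℕ) [NeZero N] [NeZero M] (z : Fin M → ℝ) (t : ℕ) (lam' : ℝ)
    (p q : Fin N) :
    Vm m N M z t lam' p q
      = (if p = q then 1 else 0) + lam'⁻¹ * (if p + 1 = q then vv m N M z t p else 0) := by
  rw [Vm, Matrix.add_apply, Matrix.smul_apply, Matrix.sum_apply, Matrix.one_apply, smul_eq_mul]
  congr 1
  congr 1
  rw [Finset.sum_eq_single p]
  · simp [Matrix.single]
  · intro k _ hk; simp [Matrix.single, hk, Ne.symm hk]
  · simp

lemma U1_apply (m N M : ℕ) [NeZero N] [NeZero M] (z : Fin M → ℝ) (lam' : ℝ) (p q : Fin N) :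
    U1 m N M z lam' p q
      = lam' * (if q + 1 = p then 1 else 0) + (if p = q then vv m N M z 1 p else 0) := by
  rw [U1, Matrix.add_apply, Matrix.smul_apply, Matrix.sum_apply, Matrix.sum_apply, smul_eq_mul]
  congr 1
  · congr 1
    rw [Finset.sum_eq_single q]
    · simp [Matrix.single]
    · intro k _ hk; simp [Matrix.single, hk, Ne.symm hk]
    · simp
  · rw [Finset.sum_eq_single p]
    · simp [Matrix.single]
    · intro k _ hk; simp [Matrix.single, hk, Ne.symm hk]
    · simp

lemma submatrix_mul_key {N M : ℕ} [NeZero N] [NeZero M] (ι : Fin N → Fin M)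
    (hinj : Function.Injective ι) (A B : Matrix (Fin M) (Fin M) ℝ)
    (hA : ∀ (p : Fin N) (b : Fin M), A (ι p) b ≠ 0 → ∃ q, b = ι q) :
    (A * B).submatrix ι ι = A.submatrix ι ι * B.submatrix ι ι := by
  ext p q
  rw [Matrix.submatrix_apply, Matrix.mul_apply, Matrix.mul_apply]
  simp only [Matrix.submatrix_apply]
  have h1 : ∑ b ∈ Finset.univ.image ι, A (ι p) b * B b (ι q)
      = ∑ b : Fin M, A (ι p) b * B b (ι q) := by
    apply Finset.sum_subset (Finset.subset_univ _)
    intro x _ hx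
    have hz : A (ι p) x = 0 := by
      by_contra hne
      obtain ⟨r, hr⟩ := hA p x hne
      exact hx (Finset.mem_image.mpr ⟨r, Finset.mem_univ r, hr.symm⟩)
    rw [hz, zero_mul]
  have h2 : ∑ b ∈ Finset.univ.image ι, A (ι p) b * B b (ι q)
      = ∑ k : Fin N, A (ι p) (ι k) * B (ι k) (ι q) := by
    apply Finset.sum_image
    intro x _ y _ hxy
    exact hinj hxy
  rw [← h1, h2]

section Blocks
variable {m N M j : ℕ} [NeZero N] [NeZero M]
variable (hM : M = m * N) (hm : 2 ≤ m) (hj1 : 1 ≤ j) (hjm : j ≤ m)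

lemma supp_Spow (hj1 : 1 ≤ j) (hM : M = m * N) (hm : 2 ≤ m) (hjm : j ≤ m)
    (p : Fin N) (b : Fin M) (h : (Sm M ^ m) (iot m N M j p) b ≠ 0) :
    ∃ q, b = iot m N M j q := by
  rw [Smpow_apply] at h
  have hc : iot m N M j p = b + ((m : ℕ) : Fin M) := by
    by_contra hne; simp [hne] at h
  refine ⟨p - 1, ?_⟩
  have h2 : iot m N M j p = iot m N M j (p - 1) + ((m : ℕ) : Fin M) := by
    have := iot_succ hM hj1 (p - 1)
    rwa [sub_add_cancel] at this
  have := hc.symm.trans h2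
  exact (add_right_cancel this)

lemma supp_W (hj1 : 1 ≤ j) (hM : M = m * N) (z : Fin M → ℝ) (lam : ℝ) (i : ℕ)
    (p : Fin N) (b : Fin M) (h : Wm m M z lam i (iot m N M j p) b ≠ 0) :
    ∃ q, b = iot m N M j q := by
  rw [Wm_apply] at h
  by_cases h1 : iot m N M j p = b
  · exact ⟨p, h1.symm⟩
  by_cases h2 : iot m N M j p + ((m : ℕ) : Fin M) = b
  · exact ⟨p + 1, by rw [iot_succ hM hj1 p, h2]⟩
  simp [h1, h2] at h

lemma sub_Smpow (hM : M = m * N) (hm : 2 ≤ m) (hj1 : 1 ≤ j) (hjm : j ≤ m) :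
    (Sm M ^ m).submatrix (iot m N M j) (iot m N M j) = Sm N := by
  ext p q
  rw [Matrix.submatrix_apply, Smpow_apply, Sm_apply]
  congr 1
  rw [eq_iff_iff]
  rw [show iot m N M j q + ((m : ℕ) : Fin M) = iot m N M j (q + 1) from (iot_succ hM hj1 q).symm]
  constructor
  · intro h; exact (iot_inj hM hj1 hjm h).symm
  · intro h; rw [← h]

lemma sub_W_lo (hM : M = m * N) (hm : 2 ≤ m) (hj1 : 1 ≤ j) (hjm : j ≤ m)
    (z : Fin M → ℝ) (lam : ℝ) (i : ℕ) (hi : j + i + 1 ≤ m) :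
    (Wm m M z lam i).submatrix (iot m N M j) (iot m N M j)
      = Vm m N M z (j + i + 1) (lam ^ m) := by
  ext p q
  rw [Matrix.submatrix_apply, Wm_apply, Vm_apply]
  have ec1 : (iot m N M j p = iot m N M j q) = (p = q) := by
    rw [eq_iff_iff]
    exact ⟨fun h => iot_inj hM hj1 hjm h, fun h => by rw [h]⟩
  have ec2 : (iot m N M j p + ((m : ℕ) : Fin M) = iot m N M j q) = (p + 1 = q) := by
    rw [eq_iff_iff, show iot m N M j p + ((m : ℕ) : Fin M) = iot m N M j (p + 1)
      from (iot_succ hM hj1 p).symm]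
    exact ⟨fun h => iot_inj hM hj1 hjm h, fun h => by rw [h]⟩
  have ev : z (iot m N M j p + ((i + 1 : ℕ) : Fin M)) = vv m N M z (j + i + 1) p := by
    rw [vv]
    congr 1
    rw [iot]
    rw [show ((m * p.val + (j - 1) : ℕ) : Fin M) + ((i + 1 : ℕ) : Fin M)
        = ((m * p.val + (j - 1) + (i + 1) : ℕ) : Fin M) from by push_cast; ring]
    congr 1
    omega
  simp only [ec1, ec2, ev]

lemma move_step (hM : M = m * N) (hm : 2 ≤ m) (hj1 : 1 ≤ j) (hjm : j ≤ m)
    (z : Fin M → ℝ) (lam : ℝ) (i : ℕ) (hi : m ≤ j + i) :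
    Sm N * (Wm m M z lam i).submatrix (iot m N M j) (iot m N M j)
      = Vm m N M z (j + i + 1 - m) (lam ^ m) * Sm N := by
  ext p q
  rw [Matrix.mul_apply, Matrix.mul_apply]
  have hS1 : ∀ c : Fin N, Sm N p c = if c = p - 1 then (1:ℝ) else 0 := by
    intro c; rw [Sm_apply]; congr 1
    rw [eq_iff_iff]
    constructor
    · intro h; rw [← h]; abel
    · intro h; rw [h]; abel
  have hS2 : ∀ c : Fin N, Sm N c q = if c = q + 1 then (1:ℝ) else 0 := by
    intro c; rw [Sm_apply]; congr 1; rw [eq_iff_iff]; exact eq_comm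
  simp only [hS1, hS2]
  rw [sum_ite_one_mul (fun c => (Wm m M z lam i).submatrix (iot m N M j) (iot m N M j) c q) (p - 1),
    sum_mul_ite_one (fun c => Vm m N M z (j + i + 1 - m) (lam ^ m) p c) (q + 1)]
  rw [Matrix.submatrix_apply, Wm_apply, Vm_apply]
  have hp : iot m N M j (p - 1) + ((m : ℕ) : Fin M) = iot m N M j p := by
    have := iot_succ hM hj1 (p - 1)
    rw [sub_add_cancel] at this
    exact this.symm
  have ec1 : (iot m N M j (p - 1) = iot m N M j q) = (p = q + 1) := by
    rw [eq_iff_iff]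
    constructor
    · intro h
      have := iot_inj hM hj1 hjm h
      rw [← this]; abel
    · intro h
      have hq : p - 1 = q := by rw [h]; abel
      rw [hq]
  have ec2 : (iot m N M j (p - 1) + ((m : ℕ) : Fin M) = iot m N M j q) = (p + 1 = q + 1) := by
    rw [eq_iff_iff, hp]
    constructor
    · intro h
      rw [iot_inj hM hj1 hjm h]
    · intro h
      rw [show p = q from add_right_cancel h]
  have ev : z (iot m N M j (p - 1) + ((i + 1 : ℕ) : Fin M)) = vv m N M z (j + i + 1 - m) p := by
    rw [vv]
    congr 1
    rw [iot]
    rw [show ((m * (p-1).val + (j - 1) : ℕ) : Fin M) + ((i + 1 : ℕ) : Fin M)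
        = ((m * (p-1).val + (j - 1) + (i + 1) : ℕ) : Fin M) from by push_cast; ring]
    have hc := cast_shift (M := M) hM (p - 1) (j + i - m)
    rw [sub_add_cancel] at hc
    rw [show m * (p-1).val + (j - 1) + (i + 1) = m * (p-1).val + m + (j + i - m) from by omega]
    rw [← hc]
    congr 1
    omega
  simp only [ec1, ec2, ev]

lemma U1_eq (hm : 2 ≤ m) (z : Fin M → ℝ) (lam : ℝ) (hlam : lam ≠ 0) :
    (lam ^ m) • (Vm m N M z 1 (lam ^ m) * Sm N) = U1 m N M z (lam ^ m) := by
  have hne : lam ^ m ≠ 0 := pow_ne_zero _ hlam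
  ext p q
  rw [Matrix.smul_apply, Matrix.mul_apply, smul_eq_mul]
  have hS2 : ∀ c : Fin N, Sm N c q = if c = q + 1 then (1:ℝ) else 0 := by
    intro c; rw [Sm_apply]; congr 1; rw [eq_iff_iff]; exact eq_comm
  simp only [hS2]
  rw [sum_mul_ite_one (fun c => Vm m N M z 1 (lam ^ m) p c) (q + 1)]
  rw [Vm_apply, U1_apply]
  have e1 : (p = q + 1) = (q + 1 = p) := by rw [eq_iff_iff]; exact eq_comm
  have e2 : (p + 1 = q + 1) = (p = q) := by
    rw [eq_iff_iff]
    exact ⟨fun h => add_right_cancel h, fun h => by rw [h]⟩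
  simp only [e1, e2]
  rw [mul_add, ← mul_assoc, mul_inv_cancel₀ hne, one_mul]

end Blocks

section Assemble
variable {m N M j : ℕ} [NeZero N] [NeZero M]

lemma sub_prod (hM : M = m * N) (hm : 2 ≤ m) (hj1 : 1 ≤ j) (hjm : j ≤ m)
    (z : Fin M → ℝ) (lam : ℝ) (l : List ℕ) :
    ((l.map (Wm m M z lam)).prod).submatrix (iot m N M j) (iot m N M j)
      = (l.map (fun i => (Wm m M z lam i).submatrix (iot m N M j) (iot m N M j))).prod := by
  induction l with
  | nil => simpa using Matrix.submatrix_one _ (iot_inj hM hj1 hjm)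
  | cons i l ih =>
    simp only [List.map_cons, List.prod_cons]
    rw [submatrix_mul_key (iot m N M j) (iot_inj hM hj1 hjm) _ _ (supp_W hj1 hM z lam i), ih]

lemma move_prod (hM : M = m * N) (hm : 2 ≤ m) (hj1 : 1 ≤ j) (hjm : j ≤ m)
    (z : Fin M → ℝ) (lam : ℝ) :
    ∀ n, n ≤ j →
      Sm N * ((List.range' (m-j) n).reverse.map
          (fun i => (Wm m M z lam i).submatrix (iot m N M j) (iot m N M j))).prod
        = ((List.range' 1 n).reverse.map (fun t => Vm m N M z t (lam ^ m))).prod * Sm N := by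
  intro n
  induction n with
  | zero => simp
  | succ n ih =>
    intro hn
    have h1 : List.range' (m-j) (n+1) = List.range' (m-j) n ++ [m - j + n] := by
      rw [← List.range'_one (s := m - j + n) (step := 1), List.range'_append_1]
    have h2 : List.range' 1 (n+1) = List.range' 1 n ++ [1 + n] := by
      rw [← List.range'_one (s := 1 + n) (step := 1), List.range'_append_1]
    rw [h1, h2]
    simp only [List.reverse_append, List.reverse_cons, List.reverse_nil, List.nil_append,
      List.cons_append, List.map_cons, List.prod_cons]
    rw [← mul_assoc, move_step hM hm hj1 hjm z lam (m - j + n) (by omega)]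
    rw [show j + (m - j + n) + 1 - m = 1 + n from by omega]
    rw [mul_assoc, ih (by omega), ← mul_assoc]

lemma tail_eq (hM : M = m * N) (hm : 2 ≤ m) (hj1 : 1 ≤ j) (hjm : j ≤ m)
    (z : Fin M → ℝ) (lam : ℝ) :
    ∀ (n s : ℕ), s + n ≤ m - j →
      (List.range' s n).map
          (fun i => (Wm m M z lam i).submatrix (iot m N M j) (iot m N M j))
        = (List.range' (j + 1 + s) n).map (fun t => Vm m N M z t (lam ^ m)) := by
  intro n
  induction n with
  | zero => simp
  | succ n ih =>
    intro s hs
    rw [List.range'_succ, List.range'_succ]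
    simp only [List.map_cons]
    congr 1
    · rw [show j + 1 + s = j + s + 1 from by omega, sub_W_lo hM hm hj1 hjm z lam s (by omega)]
    · exact ih (s+1) (by omega)

end Assemble

theorem statement15 (m N M : ℕ) (hm : 2 ≤ m) (hN : 2 ≤ N) (hM : M = m * N)
    [NeZero N] [NeZero M]
    (z : Fin M → ℝ) (lam : ℝ) (hlam : lam ≠ 0) (μ : ℝ) (j : ℕ) (hj1 : 1 ≤ j) (hjm : j ≤ m) :
    (Tm m M z lam ^ m - μ • (1 : Matrix (Fin M) (Fin M) ℝ)).submatrix
        (fun k : Fin N => ((m * k.val + (j - 1) : ℕ) : Fin M))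
        (fun k : Fin N => ((m * k.val + (j - 1) : ℕ) : Fin M))
      = Lm m N M z j (lam ^ m) - μ • (1 : Matrix (Fin N) (Fin N) ℝ) := by
  have hι : (fun k : Fin N => ((m * k.val + (j - 1) : ℕ) : Fin M)) = iot m N M j := rfl
  rw [hι]
  have hsub : (Tm m M z lam ^ m - μ • 1).submatrix (iot m N M j) (iot m N M j)
      = (Tm m M z lam ^ m).submatrix (iot m N M j) (iot m N M j)
        - μ • (1 : Matrix (Fin N) (Fin N) ℝ) := by
    ext p q
    rw [Matrix.submatrix_apply, Matrix.sub_apply, Matrix.sub_apply, Matrix.submatrix_apply,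
      Matrix.smul_apply, Matrix.smul_apply, Matrix.one_apply, Matrix.one_apply,
      smul_eq_mul, smul_eq_mul]
    have ec : (iot m N M j p = iot m N M j q) = (p = q) := by
      rw [eq_iff_iff]
      exact ⟨fun h => iot_inj hM hj1 hjm h, fun h => by rw [h]⟩
    simp only [ec]
  rw [hsub]
  congr 1
  rw [Tpow m M hm z lam hlam m]
  rw [show ((lam ^ m • (Sm M ^ m * ((List.range' 0 m).reverse.map (Wm m M z lam)).prod)).submatrix
      (iot m N M j) (iot m N M j))
    = lam ^ m • ((Sm M ^ m * ((List.range' 0 m).reverse.map (Wm m M z lam)).prod).submatrix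
      (iot m N M j) (iot m N M j)) from rfl]
  rw [submatrix_mul_key _ (iot_inj hM hj1 hjm) _ _ (supp_Spow hj1 hM hm hjm)]
  rw [sub_Smpow hM hm hj1 hjm]
  rw [sub_prod hM hm hj1 hjm z lam]
  have hsplit : List.range' 0 m = List.range' 0 (m - j) ++ List.range' (m - j) j := by
    have h := List.range'_append_1 (s := 0) (m := m - j) (n := j)
    simp only [Nat.zero_add] at h
    rw [h]
    congr 1
    omega
  rw [hsplit, List.reverse_append, List.map_append, List.prod_append]
  have h3 : List.range' 1 j = 1 :: List.range' 2 (j - 1) := by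
    have h := List.range'_succ (s := 1) (n := j - 1) (step := 1)
    rw [show j - 1 + 1 = j from by omega] at h
    exact h
  have hY : ((List.range' 0 (m - j)).reverse.map
        (fun i => (Wm m M z lam i).submatrix (iot m N M j) (iot m N M j)))
      = (List.range' (j + 1) (m - j)).reverse.map (fun t => Vm m N M z t (lam ^ m)) := by
    rw [List.map_reverse, List.map_reverse, tail_eq hM hm hj1 hjm z lam (m - j) 0 (by omega)]
  rw [hY, ← mul_assoc, move_prod hM hm hj1 hjm z lam j le_rfl, h3]
  simp only [List.reverse_cons, List.map_append, List.prod_append, List.map_cons,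
    List.map_nil, List.prod_cons, List.prod_nil, mul_one]
  rw [Lm, ← U1_eq hm z lam hlam, mul_smul_comm, smul_mul_assoc]
  congr 1
  simp only [mul_assoc]
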